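/- Let k ≥ 3 and let D be a super-orientation of the complement of C_{2k+1}, with vertices labeled x_0,…,x_{2k} so that x_i and x_j are adjacent in the underlying graph if and only if j − i ≢ ±1 (mod 2k+1). Suppose that D contains no arc (x_j, x_i) with 0 ≤ i < j ≤ 2k−2 and no arc (x_j, x_i) with 2 ≤ i < j ≤ 2k. If D contains at least one of the arcs (x_{2k−1}, x_0), (x_{2k}, x_1), (x_{2k−2}, x_0), (x_{2k}, x_2), (x_{2k−1}, x_1), then D has a path partition into two directed paths that is orthogonal to {x_0, x_{2k}}. -/

import Mathlib

/-- A directed path in a digraph with arc relation `A`: a nonempty list of distinct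
vertices each of which dominates the next. -/
def IsDipath {V : Type*} (A : V → V → Prop) (p : List V) : Prop :=
  p ≠ [] ∧ p.Nodup ∧ p.Chain' A

/-- A path partition of the digraph `(V, A)`: a collection of vertex-disjoint directed
paths covering all of `V`. -/
def IsPathPartition {V : Type*} (A : V → V → Prop) (P : Set (List V)) : Prop :=
  (∀ p ∈ P, IsDipath A p) ∧
  (∀ p ∈ P, ∀ q ∈ P, p ≠ q → ∀ v : V, v ∈ p → v ∉ q) ∧
  (∀ v : V, ∃ p ∈ P, v ∈ p)

/-- A path partition `P` and a stable set `S` are orthogonal if every path of `P`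
contains exactly one vertex of `S`. -/
def OrthogonalPP {V : Type*} (P : Set (List V)) (S : Set V) : Prop :=
  ∀ p ∈ P, ∃! v : V, v ∈ S ∧ v ∈ p

private lemma myCinj {k : ℕ} (a b : ℕ) (ha : a < 2*k+1) (hb : b < 2*k+1)
    (h : (a : ZMod (2*k+1)) = (b : ZMod (2*k+1))) : a = b := by
  have : NeZero (2*k+1) := ⟨by omega⟩
  have := congrArg ZMod.val h
  rwa [ZMod.val_cast_of_lt ha, ZMod.val_cast_of_lt hb] at this

private lemma chain'_map_range' {α : Type*} (R : α → α → Prop) (f : ℕ → α) (m : ℕ)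
    (h : ∀ i, i+1 < m → R (f i) (f (i+1))) :
    List.Chain' R ((List.range m).map f) := by
  unfold List.Chain'; rw [List.isChain_map]
  cases m with
  | zero => simp
  | succ s => exact (List.isChain_range_succ _ s).mpr fun i hi => h i (by omega)

private lemma mem_map_range' {f : ℕ → ℕ} {m x : ℕ} :
    x ∈ (List.range m).map f ↔ ∃ i < m, f i = x := by
  simp [List.mem_map, List.mem_range]

/-- all "forward" arcs with gap ≥ 2 exist, except possibly those from
`{0,1}` to `{2k-1, 2k}`. -/
private lemma fwdArc {k : ℕ} (hk : 3 ≤ k)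
    (A : ZMod (2*k+1) → ZMod (2*k+1) → Prop)
    (hso : ∀ u v : ZMod (2*k+1),
      (A u v ∨ A v u) ↔ (u ≠ v ∧ v - u ≠ 1 ∧ u - v ≠ 1))
    (h1 : ∀ i j : ℕ, i < j → j ≤ 2*k-2 →
      ¬ A ((j : ZMod (2*k+1))) ((i : ZMod (2*k+1))))
    (h2 : ∀ i j : ℕ, 2 ≤ i → i < j → j ≤ 2*k →
      ¬ A ((j : ZMod (2*k+1))) ((i : ZMod (2*k+1))))
    (i j : ℕ) (hij : i + 2 ≤ j) (hj : j ≤ 2*k) (hside : j ≤ 2*k-2 ∨ 2 ≤ i) :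
    A ((i : ZMod (2*k+1))) ((j : ZMod (2*k+1))) := by
  have hne : (i : ZMod (2*k+1)) ≠ (j : ZMod (2*k+1)) := fun h => by
    have := myCinj (k := k) i j (by omega) (by omega) h; omega
  have hsub1 : (j : ZMod (2*k+1)) - (i : ZMod (2*k+1)) ≠ 1 := by
    intro h
    rw [← Nat.cast_sub (by omega : i ≤ j)] at h
    have := myCinj (k := k) (j - i) 1 (by omega) (by omega) (by rw [Nat.cast_one]; exact h)
    omega
  have hsub2 : (i : ZMod (2*k+1)) - (j : ZMod (2*k+1)) ≠ 1 := by
    intro h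
    have h' : (i : ZMod (2*k+1)) = ((j+1 : ℕ) : ZMod (2*k+1)) := by
      push_cast
      linear_combination h
    by_cases hj' : j + 1 < 2*k+1
    · have := myCinj (k := k) i (j+1) (by omega) hj' h'; omega
    · -- j = 2k, so j+1 = 2k+1 ≡ 0, hence i = 0
      have hj2k : j = 2*k := by omega
      have h0 : ((j+1 : ℕ) : ZMod (2*k+1)) = ((0 : ℕ) : ZMod (2*k+1)) := by
        rw [hj2k]
        push_cast
        rw [show ((2:ZMod (2*k+1))*k+1) = ((2*k+1 : ℕ) : ZMod (2*k+1)) by push_cast; ring]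
        simp [ZMod.natCast_self]
      rw [h0] at h'
      have := myCinj (k := k) i 0 (by omega) (by omega) h'
      omega
  rcases (hso _ _).mpr ⟨hne, hsub1, hsub2⟩ with h | h
  · exact h
  · exfalso
    rcases hside with hs | hs
    · exact h1 i j (by omega) hs h
    · exact h2 i j hs (by omega) hj h

private lemma assemble {k : ℕ} (hk : 3 ≤ k) (A : ZMod (2*k+1) → ZMod (2*k+1) → Prop)
    (a1 a2 : List ℕ)
    (hlt1 : ∀ x ∈ a1, x < 2*k+1) (hlt2 : ∀ x ∈ a2, x < 2*k+1)
    (hne1 : a1 ≠ []) (hne2 : a2 ≠ [])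
    (hnd1 : a1.Nodup) (hnd2 : a2.Nodup)
    (hdisj : ∀ x ∈ a1, x ∉ a2)
    (hch1 : List.Chain' (fun i j : ℕ => A (i : ZMod (2*k+1)) (j : ZMod (2*k+1))) a1)
    (hch2 : List.Chain' (fun i j : ℕ => A (i : ZMod (2*k+1)) (j : ZMod (2*k+1))) a2)
    (hcov : ∀ m, m < 2*k+1 → m ∈ a1 ∨ m ∈ a2)
    (h01 : 0 ∈ a1) (h2k2 : 2*k ∈ a2) (h2k1 : 2*k ∉ a1) (h02 : 0 ∉ a2) :
    ∃ p₁ p₂ : List (ZMod (2*k+1)), p₁ ≠ p₂ ∧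
      IsPathPartition A {p₁, p₂} ∧
      OrthogonalPP {p₁, p₂} {((0 : ℕ) : ZMod (2*k+1)), ((2*k : ℕ) : ZMod (2*k+1))} := by
  have : NeZero (2*k+1) := ⟨by omega⟩
  set c : ℕ → ZMod (2*k+1) := Nat.cast with hc
  refine ⟨a1.map c, a2.map c, ?_, ⟨?_, ?_, ?_⟩, ?_⟩
  · -- p₁ ≠ p₂ : c 0 ∈ p₁ \ p₂
    intro h
    have : c 0 ∈ a2.map c := h ▸ List.mem_map_of_mem (f := c) h01
    obtain ⟨x, hx, hxe⟩ := List.mem_map.mp this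
    have := myCinj (k := k) x 0 (hlt2 x hx) (by omega) hxe
    exact h02 (this ▸ hx)
  · -- each is a dipath
    rintro p (rfl | rfl)
    · exact ⟨by simpa using hne1,
        List.Nodup.map_on (fun x hx y hy h => myCinj (k := k) x y (hlt1 x hx) (hlt1 y hy) h) hnd1,
        List.isChain_map_of_isChain c (fun _ _ h => h) hch1⟩
    · exact ⟨by simpa using hne2,
        List.Nodup.map_on (fun x hx y hy h => myCinj (k := k) x y (hlt2 x hx) (hlt2 y hy) h) hnd2,
        List.isChain_map_of_isChain c (fun _ _ h => h) hch2⟩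
  · -- disjointness
    have key : ∀ v : ZMod (2*k+1), v ∈ a1.map c → v ∉ a2.map c := by
      intro v hv1 hv2
      obtain ⟨x, hx, rfl⟩ := List.mem_map.mp hv1
      obtain ⟨y, hy, hye⟩ := List.mem_map.mp hv2
      have := myCinj (k := k) y x (hlt2 y hy) (hlt1 x hx) hye
      exact hdisj x hx (this ▸ hy)
    rintro p (rfl | rfl) q (rfl | rfl) hpq v hv
    · exact absurd rfl hpq
    · exact key v hv
    · exact fun h => key v h hv
    · exact absurd rfl hpq
  · -- coverage
    intro v
    have hv : v.val < 2*k+1 := ZMod.val_lt v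
    have hvc : c v.val = v := ZMod.natCast_rightInverse v
    rcases hcov v.val hv with h | h
    · exact ⟨a1.map c, Or.inl rfl, hvc ▸ List.mem_map_of_mem (f := c) h⟩
    · exact ⟨a2.map c, Or.inr rfl, hvc ▸ List.mem_map_of_mem (f := c) h⟩
  · -- orthogonality
    have hne0 : c 0 ≠ c (2*k) := fun h => by
      have := myCinj (k := k) 0 (2*k) (by omega) (by omega) h
      omega
    rintro p (rfl | rfl)
    · refine ⟨c 0, ⟨Or.inl rfl, List.mem_map_of_mem (f := c) h01⟩, ?_⟩
      rintro y ⟨(rfl | hy), hyp⟩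
      · rfl
      · exfalso
        rw [Set.mem_singleton_iff] at hy
        subst hy
        obtain ⟨x, hx, hxe⟩ := List.mem_map.mp hyp
        have := myCinj (k := k) x (2*k) (hlt1 x hx) (by omega) hxe
        exact h2k1 (this ▸ hx)
    · refine ⟨c (2*k), ⟨Or.inr rfl, List.mem_map_of_mem (f := c) h2k2⟩, ?_⟩
      rintro y ⟨(rfl | hy), hyp⟩
      · exfalso
        obtain ⟨x, hx, hxe⟩ := List.mem_map.mp hyp
        have := myCinj (k := k) x 0 (hlt2 x hx) (by omega) hxe
        exact h02 (this ▸ hx)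
      · rw [Set.mem_singleton_iff] at hy; exact hy

private lemma getLast?_map_range {α : Type*} (f : ℕ → α) (m : ℕ) (hm : m ≠ 0) :
    ((List.range m).map f).getLast? = some (f (m-1)) := by
  obtain ⟨s, rfl⟩ : ∃ s, m = s+1 := ⟨m-1, by omega⟩
  rw [List.range_succ, List.map_append]
  simpa using List.getLast?_concat _

private lemma head?_map_range {α : Type*} (f : ℕ → α) (m : ℕ) (hm : m ≠ 0) :
    ((List.range m).map f).head? = some (f 0) := by
  obtain ⟨s, rfl⟩ : ∃ s, m = s+1 := ⟨m-1, by omega⟩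
  rw [List.range_succ_eq_map]
  simp


/-- let `D` be a super-orientation of `(C_{2k+1})ᶜ`, `k ≥ 3`, with no arc
`(x_j, x_i)` for `0 ≤ i < j ≤ 2k-2` nor for `2 ≤ i < j ≤ 2k`. If `D` contains one of the
arcs `(x_{2k-1}, x_0)`, `(x_{2k}, x_1)`, `(x_{2k-2}, x_0)`, `(x_{2k}, x_2)`,
`(x_{2k-1}, x_1)`, then `D` has a path partition into two directed paths orthogonal to
`{x_0, x_{2k}}`. -/
theorem stmt_10 (k : ℕ) (hk : 3 ≤ k)
    (A : ZMod (2*k+1) → ZMod (2*k+1) → Prop)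
    (hso : ∀ u v : ZMod (2*k+1),
      (A u v ∨ A v u) ↔ (u ≠ v ∧ v - u ≠ 1 ∧ u - v ≠ 1))
    (h1 : ∀ i j : ℕ, i < j → j ≤ 2*k-2 →
      ¬ A ((j : ZMod (2*k+1))) ((i : ZMod (2*k+1))))
    (h2 : ∀ i j : ℕ, 2 ≤ i → i < j → j ≤ 2*k →
      ¬ A ((j : ZMod (2*k+1))) ((i : ZMod (2*k+1))))
    (harc :
      A ((2*k-1 : ℕ) : ZMod (2*k+1)) ((0 : ℕ) : ZMod (2*k+1)) ∨
      A ((2*k : ℕ) : ZMod (2*k+1)) ((1 : ℕ) : ZMod (2*k+1)) ∨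
      A ((2*k-2 : ℕ) : ZMod (2*k+1)) ((0 : ℕ) : ZMod (2*k+1)) ∨
      A ((2*k : ℕ) : ZMod (2*k+1)) ((2 : ℕ) : ZMod (2*k+1)) ∨
      A ((2*k-1 : ℕ) : ZMod (2*k+1)) ((1 : ℕ) : ZMod (2*k+1))) :
    ∃ p₁ p₂ : List (ZMod (2*k+1)), p₁ ≠ p₂ ∧
      IsPathPartition A {p₁, p₂} ∧
      OrthogonalPP {p₁, p₂} {((0 : ℕ) : ZMod (2*k+1)), ((2*k : ℕ) : ZMod (2*k+1))} := by
  have fwd := fwdArc hk A hso h1 h2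
  rcases harc with hA | hA | hA | hA | hA
  · -- arc (2k-1, 0) : a1 = odds ++ evens, a2 = [2k]
    refine assemble hk A
      ((List.range k).map (fun i => 2*i+1) ++ (List.range k).map (fun i => 2*i)) [2*k]
      ?_ ?_ ?_ ?_ ?_ ?_ ?_ ?_ ?_ ?_ ?_ ?_ ?_ ?_
    · intro x hx
      simp only [List.mem_append, List.mem_map, List.mem_range] at hx
      rcases hx with ⟨i, hi, rfl⟩ | ⟨i, hi, rfl⟩ <;> omega
    · intro x hx; simp only [List.mem_singleton] at hx; omega
    · apply List.ne_nil_of_length_pos; simp; omega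
    · simp
    · rw [List.nodup_append]
      refine ⟨List.Nodup.map (fun a b h => by omega) List.nodup_range,
        List.Nodup.map (fun a b h => by omega) List.nodup_range, ?_⟩
      intro x hx y hx' hxy; subst hxy
      simp only [List.mem_map, List.mem_range] at hx hx'
      obtain ⟨i, hi, rfl⟩ := hx
      obtain ⟨j, hj, hje⟩ := hx'
      omega
    · simp
    · intro x hx hx'
      simp only [List.mem_append, List.mem_map, List.mem_range] at hx
      simp only [List.mem_singleton] at hx'
      rcases hx with ⟨i, hi, rfl⟩ | ⟨i, hi, rfl⟩ <;> omega
    · unfold List.Chain'; rw [List.isChain_append]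
      refine ⟨chain'_map_range' _ _ _
          (fun i hi => fwd (2*i+1) (2*(i+1)+1) (by omega) (by omega) (by omega)),
        chain'_map_range' _ _ _
          (fun i hi => fwd (2*i) (2*(i+1)) (by omega) (by omega) (by omega)), ?_⟩
      intro x hx y hy
      rw [getLast?_map_range _ k (by omega)] at hx
      rw [head?_map_range _ k (by omega)] at hy
      simp only [Option.mem_def, Option.some.injEq] at hx hy
      subst hx; subst hy
      show A ((2*(k-1)+1 : ℕ) : ZMod (2*k+1)) ((2*0 : ℕ) : ZMod (2*k+1))
      rw [show (2*(k-1)+1 : ℕ) = 2*k-1 by omega, show (2*0 : ℕ) = 0 by omega]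
      exact hA
    · exact List.isChain_singleton _
    · intro m hm
      by_cases hm2 : m = 2*k
      · right; simp [hm2]
      · left
        simp only [List.mem_append, List.mem_map, List.mem_range]
        rcases Nat.even_or_odd m with ⟨r, rfl⟩ | ⟨r, rfl⟩
        · right; exact ⟨r, by omega, by omega⟩
        · left; exact ⟨r, by omega, by omega⟩
    · simp only [List.mem_append, List.mem_map, List.mem_range]
      right; exact ⟨0, by omega, by omega⟩
    · simp
    · intro hx
      simp only [List.mem_append, List.mem_map, List.mem_range] at hx
      rcases hx with ⟨i, hi, h⟩ | ⟨i, hi, h⟩ <;> omega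
    · simp only [List.mem_singleton]; omega
  · -- arc (2k, 1) : a1 = [0], a2 = evens2 ++ odds1
    refine assemble hk A [0]
      ((List.range k).map (fun i => 2*i+2) ++ (List.range k).map (fun i => 2*i+1))
      ?_ ?_ ?_ ?_ ?_ ?_ ?_ ?_ ?_ ?_ ?_ ?_ ?_ ?_
    · intro x hx; simp only [List.mem_singleton] at hx; omega
    · intro x hx
      simp only [List.mem_append, List.mem_map, List.mem_range] at hx
      rcases hx with ⟨i, hi, rfl⟩ | ⟨i, hi, rfl⟩ <;> omega
    · simp
    · apply List.ne_nil_of_length_pos; simp; omega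
    · simp
    · rw [List.nodup_append]
      refine ⟨List.Nodup.map (fun a b h => by omega) List.nodup_range,
        List.Nodup.map (fun a b h => by omega) List.nodup_range, ?_⟩
      intro x hx y hx' hxy; subst hxy
      simp only [List.mem_map, List.mem_range] at hx hx'
      obtain ⟨i, hi, rfl⟩ := hx
      obtain ⟨j, hj, hje⟩ := hx'
      omega
    · intro x hx hx'
      simp only [List.mem_singleton] at hx
      simp only [List.mem_append, List.mem_map, List.mem_range] at hx'
      rcases hx' with ⟨i, hi, h⟩ | ⟨i, hi, h⟩ <;> omega
    · exact List.isChain_singleton _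
    · unfold List.Chain'; rw [List.isChain_append]
      refine ⟨chain'_map_range' _ _ _
          (fun i hi => fwd (2*i+2) (2*(i+1)+2) (by omega) (by omega) (by omega)),
        chain'_map_range' _ _ _
          (fun i hi => fwd (2*i+1) (2*(i+1)+1) (by omega) (by omega) (by omega)), ?_⟩
      intro x hx y hy
      rw [getLast?_map_range _ k (by omega)] at hx
      rw [head?_map_range _ k (by omega)] at hy
      simp only [Option.mem_def, Option.some.injEq] at hx hy
      subst hx; subst hy
      show A ((2*(k-1)+2 : ℕ) : ZMod (2*k+1)) ((2*0+1 : ℕ) : ZMod (2*k+1))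
      rw [show (2*(k-1)+2 : ℕ) = 2*k by omega, show (2*0+1 : ℕ) = 1 by omega]
      exact hA
    · intro m hm
      by_cases hm0 : m = 0
      · left; simp [hm0]
      · right
        simp only [List.mem_append, List.mem_map, List.mem_range]
        rcases Nat.even_or_odd m with ⟨r, rfl⟩ | ⟨r, rfl⟩
        · left; exact ⟨r-1, by omega, by omega⟩
        · right; exact ⟨r, by omega, by omega⟩
    · simp
    · simp only [List.mem_append, List.mem_map, List.mem_range]
      left; exact ⟨k-1, by omega, by omega⟩
    · simp only [List.mem_singleton]; omega
    · intro hx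
      simp only [List.mem_append, List.mem_map, List.mem_range] at hx
      rcases hx with ⟨i, hi, h⟩ | ⟨i, hi, h⟩ <;> omega
  · -- arc (2k-2, 0) : contradiction with h1
    exact absurd hA (h1 0 (2*k-2) (by omega) (by omega))
  · -- arc (2k, 2) : contradiction with h2
    exact absurd hA (h2 2 (2*k) (by omega) (by omega) (by omega))
  · -- arc (2k-1, 1) : a1 = [0, 2], a2 = odds3 ++ 1 :: evens4
    refine assemble hk A [0, 2]
      ((List.range (k-1)).map (fun i => 2*i+3) ++ 1 :: (List.range (k-1)).map (fun i => 2*i+4))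
      ?_ ?_ ?_ ?_ ?_ ?_ ?_ ?_ ?_ ?_ ?_ ?_ ?_ ?_
    · intro x hx; simp only [List.mem_cons, List.mem_singleton, List.not_mem_nil, or_false] at hx; omega
    · intro x hx
      simp only [List.mem_append, List.mem_cons, List.mem_map, List.mem_range] at hx
      rcases hx with ⟨i, hi, rfl⟩ | rfl | ⟨i, hi, rfl⟩ <;> omega
    · simp
    · apply List.ne_nil_of_length_pos; simp
    · simp
    · rw [List.nodup_append]
      refine ⟨List.Nodup.map (fun a b h => by omega) List.nodup_range, ?_, ?_⟩
      · rw [List.nodup_cons]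
        refine ⟨?_, List.Nodup.map (fun a b h => by omega) List.nodup_range⟩
        intro h1'
        simp only [List.mem_map, List.mem_range] at h1'
        obtain ⟨i, hi, h⟩ := h1'
        omega
      · intro x hx y hx' hxy; subst hxy
        simp only [List.mem_map, List.mem_range] at hx
        simp only [List.mem_cons, List.mem_map, List.mem_range] at hx'
        obtain ⟨i, hi, rfl⟩ := hx
        rcases hx' with h | ⟨j, hj, hje⟩ <;> omega
    · intro x hx hx'
      simp only [List.mem_cons, List.mem_singleton, List.not_mem_nil, or_false] at hx
      simp only [List.mem_append, List.mem_cons, List.mem_map, List.mem_range] at hx'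
      rcases hx' with ⟨i, hi, h⟩ | h | ⟨i, hi, h⟩ <;> omega
    · exact List.isChain_pair.mpr (fwd 0 2 (by omega) (by omega) (by omega))
    · unfold List.Chain'; rw [List.isChain_append]
      refine ⟨chain'_map_range' _ (fun i => 2*i+3) (k-1)
          (fun i hi => fwd (2*i+3) (2*(i+1)+3) (by omega) (by omega) (by omega)), ?_, ?_⟩
      · rw [List.isChain_cons]
        refine ⟨?_, chain'_map_range' _ (fun i => 2*i+4) (k-1)
          (fun i hi => fwd (2*i+4) (2*(i+1)+4) (by omega) (by omega) (by omega))⟩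
        intro y hy
        rw [head?_map_range _ (k-1) (by omega)] at hy
        simp only [Option.mem_def, Option.some.injEq] at hy
        subst hy
        show A ((1 : ℕ) : ZMod (2*k+1)) ((2*0+4 : ℕ) : ZMod (2*k+1))
        exact fwd 1 (2*0+4) (by omega) (by omega) (by omega)
      · intro x hx y hy
        rw [getLast?_map_range _ (k-1) (by omega)] at hx
        simp only [Option.mem_def, Option.some.injEq, List.head?_cons] at hx hy
        subst hx; subst hy
        show A ((2*(k-1-1)+3 : ℕ) : ZMod (2*k+1)) ((1 : ℕ) : ZMod (2*k+1))
        rw [show (2*(k-1-1)+3 : ℕ) = 2*k-1 by omega]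
        exact hA
    · intro m hm
      rcases Nat.even_or_odd m with ⟨r, rfl⟩ | ⟨r, rfl⟩
      · by_cases h0 : r ≤ 1
        · left; simp only [List.mem_cons, List.mem_singleton, List.not_mem_nil, or_false]; omega
        · right
          simp only [List.mem_append, List.mem_cons, List.mem_map, List.mem_range]
          right; right; exact ⟨r-2, by omega, by omega⟩
      · right
        simp only [List.mem_append, List.mem_cons, List.mem_map, List.mem_range]
        by_cases h0 : r = 0
        · right; left; omega
        · left; exact ⟨r-1, by omega, by omega⟩
    · simp
    · simp only [List.mem_append, List.mem_cons, List.mem_map, List.mem_range]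
      right; right; exact ⟨k-2, by omega, by omega⟩
    · simp only [List.mem_cons, List.mem_singleton, List.not_mem_nil, or_false]; omega
    · intro hx
      simp only [List.mem_append, List.mem_cons, List.mem_map, List.mem_range] at hx
      rcases hx with ⟨i, hi, h⟩ | h | ⟨i, hi, h⟩ <;> omega
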